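/- Let β₁ ∈ [0,1), γ ∈ ℝ, and let x₀, x₁, m₀, g, η₀, η₁ ∈ ℝ^d satisfy x₁ = x₀ − γ (m₀ ⊙ η₀). Set m₁ = β₁ m₀ + (1 − β₁) g and x₂ = x₁ − γ (m₁ ⊙ η₁). Define the auxiliary points z₁ = x₁ + (β₁/(1 − β₁))(x₁ − x₀) and z₂ = x₂ + (β₁/(1 − β₁))(x₂ − x₁). Then z₂ − z₁ = (γ β₁/(1 − β₁)) m₀ ⊙ (η₀ − η₁) − γ (g ⊙ η₁). -/

import Mathlib

/-- The coordinatewise (Hadamard) product on `EuclideanSpace ℝ (Fin d)`. -/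
noncomputable def had {d : ℕ} (x y : EuclideanSpace ℝ (Fin d)) : EuclideanSpace ℝ (Fin d) :=
  (WithLp.equiv 2 (Fin d → ℝ)).symm (fun j => x j * y j)

/-- One-step identity for the auxiliary sequence `z_t = x_t + (β₁/(1−β₁))(x_t − x_{t−1})`
of the AdaSAM analysis: with `x₁ = x₀ − γ m₀ ⊙ η₀`, `m₁ = β₁ m₀ + (1−β₁) g`,
`x₂ = x₁ − γ m₁ ⊙ η₁`, one has
`z₂ − z₁ = (γβ₁/(1−β₁)) m₀ ⊙ (η₀ − η₁) − γ (g ⊙ η₁)`. -/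
theorem adasam_auxiliary_step {d : ℕ} (hd : 1 ≤ d) (β₁ γ : ℝ)
    (hβ₁ : β₁ ∈ Set.Ico (0 : ℝ) 1)
    (x₀ x₁ m₀ g η₀ η₁ : EuclideanSpace ℝ (Fin d))
    (hx₁ : x₁ = x₀ - γ • had m₀ η₀) :
    let m₁ := β₁ • m₀ + (1 - β₁) • g
    let x₂ := x₁ - γ • had m₁ η₁
    let z₁ := x₁ + (β₁ / (1 - β₁)) • (x₁ - x₀)
    let z₂ := x₂ + (β₁ / (1 - β₁)) • (x₂ - x₁)
    z₂ - z₁ = (γ * β₁ / (1 - β₁)) • had m₀ (η₀ - η₁) - γ • had g η₁ := by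
  intro m₁ x₂ z₁ z₂
  have hb : (1 : ℝ) - β₁ ≠ 0 := by have := hβ₁.2; linarith
  subst hx₁
  ext j
  simp only [z₂, z₁, x₂, m₁, had, WithLp.equiv_symm_apply, PiLp.toLp_apply,
    PiLp.sub_apply, PiLp.add_apply, PiLp.smul_apply, smul_eq_mul]
  field_simp
  ring
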